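/- arXiv:1003.4879 — 2 statements merged into one kernel-verified Lean document; each statement's English description precedes it below -/
import Mathlib

section
/- Let 0 ≤ r ≤ k ≤ n. The number of r-dimensional subspaces X of F_q^n whose identifying vector v(X) is supported in the first k coordinates (i.e., supp(v(X)) ⊆ {1,...,k}) equals [k choose r]_q · q^{r(n−k)}, where [k choose r]_q is the Gaussian (q-) binomial coefficient. -/
/-- `M` is in reduced row echelon form with pivot (leading-one) column of row `i`
given by `piv i`: pivots strictly move right, each leading coefficient is `1`,
it is the first nonzero entry of its row, and it is the only nonzero entry of
its column. -/
def IsRREFWithPivots {F : Type*} [Field F] {k n : ℕ}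
    (M : Matrix (Fin k) (Fin n) F) (piv : Fin k → Fin n) : Prop :=
  StrictMono piv ∧
  (∀ i, M i (piv i) = 1) ∧
  (∀ (i : Fin k) (j : Fin n), j < piv i → M i j = 0) ∧
  (∀ i i' : Fin k, i' ≠ i → M i' (piv i) = 0)

/-- `M` is in reduced row echelon form. -/
def IsRREF {F : Type*} [Field F] {k n : ℕ} (M : Matrix (Fin k) (Fin n) F) : Prop :=
  ∃ piv, IsRREFWithPivots M piv

/-- The identifying (binary) vector associated with pivot columns `piv`:
its ones are exactly in the pivot positions. -/
def idVec {k n : ℕ} (piv : Fin k → Fin n) : Fin n → Bool :=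
  fun j => decide (∃ i, piv i = j)

/-- The subspace distance `d_S(X,Y) = dim X + dim Y - 2 dim (X ⊓ Y)`. -/
noncomputable def subDist {F : Type*} [Field F] {n : ℕ} (X Y : Submodule F (Fin n → F)) : ℕ :=
  Module.finrank F X + Module.finrank F Y - 2 * Module.finrank F ↥(X ⊓ Y)

section Aux

variable {F : Type*} [Field F]

open Module Submodule

/-- Evaluating a linear combination of the rows of an RREF matrix at a pivot column
gives the corresponding coefficient. -/
lemma RREF.sum_apply_piv {r n : ℕ} {M : Matrix (Fin r) (Fin n) F} {piv : Fin r → Fin n}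
    (h : IsRREFWithPivots M piv) (c : Fin r → F) (i : Fin r) :
    (∑ i', c i' • M i') (piv i) = c i := by
  obtain ⟨hs, h1, h0, hc⟩ := h
  simp only [Finset.sum_apply, Pi.smul_apply, smul_eq_mul]
  rw [Finset.sum_eq_single i]
  · rw [h1 i, mul_one]
  · intro b _ hb; rw [hc i b hb, mul_zero]
  · simp

lemma RREF.linearIndependent {r n : ℕ} {M : Matrix (Fin r) (Fin n) F} {piv : Fin r → Fin n}
    (h : IsRREFWithPivots M piv) : LinearIndependent F M := by
  refine Fintype.linearIndependent_iff.mpr ?_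
  intro c hc i
  have := RREF.sum_apply_piv h c i
  rw [hc] at this
  simpa using this.symm

set_option maxHeartbeats 1000000 in
lemma RREF.finrank_span {r n : ℕ} {M : Matrix (Fin r) (Fin n) F} {piv : Fin r → Fin n}
    (h : IsRREFWithPivots M piv) :
    Module.finrank F (Submodule.span F (Set.range M)) = r := by
  have hli := RREF.linearIndependent h
  rw [finrank_span_eq_card hli, Fintype.card_fin]

lemma RREF.eq_zero_of_piv_zero {r n : ℕ} {M : Matrix (Fin r) (Fin n) F} {piv : Fin r → Fin n}
    (h : IsRREFWithPivots M piv) {x : Fin n → F}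
    (hx : x ∈ Submodule.span F (Set.range M)) (hz : ∀ i, x (piv i) = 0) : x = 0 := by
  obtain ⟨c, rfl⟩ := (mem_span_range_iff_exists_fun F).mp hx
  have hc : ∀ i, c i = 0 := fun i => by
    have := RREF.sum_apply_piv h c i
    rw [hz i] at this; exact this.symm
  apply Finset.sum_eq_zero
  intro i _
  rw [hc i, zero_smul]

/-- Every nonzero element of the row space of an RREF matrix has its first
nonzero coordinate at a pivot position. -/
lemma RREF.exists_leading {r n : ℕ} {M : Matrix (Fin r) (Fin n) F} {piv : Fin r → Fin n}
    (h : IsRREFWithPivots M piv) {x : Fin n → F}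
    (hx : x ∈ Submodule.span F (Set.range M)) (hx0 : x ≠ 0) :
    ∃ a, x (piv a) ≠ 0 ∧ ∀ j, j < piv a → x j = 0 := by
  classical
  obtain ⟨c, rfl⟩ := (mem_span_range_iff_exists_fun F).mp hx
  set T : Finset (Fin r) := Finset.univ.filter (fun i => c i ≠ 0) with hT
  have hTne : T.Nonempty := by
    by_contra hne
    apply hx0
    apply Finset.sum_eq_zero
    intro i _
    have : c i = 0 := by
      by_contra hci
      exact hne ⟨i, by simp [hT, hci]⟩
    rw [this, zero_smul]
  set a0 := T.min' hTne with ha0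
  refine ⟨a0, ?_, ?_⟩
  · rw [RREF.sum_apply_piv h c a0]
    have := T.min'_mem hTne
    simpa [hT] using this
  · intro j hj
    simp only [Finset.sum_apply, Pi.smul_apply, smul_eq_mul]
    apply Finset.sum_eq_zero
    intro i _
    by_cases hci : c i = 0
    · rw [hci, zero_mul]
    · have hiT : i ∈ T := by simp [hT, hci]
      have : a0 ≤ i := T.min'_le i hiT
      have hpiv : piv a0 ≤ piv i := h.1.monotone this
      have : j < piv i := lt_of_lt_of_le hj hpiv
      rw [h.2.2.1 i j this, mul_zero]

/-- Uniqueness of the RREF generator matrix of a subspace. -/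
lemma RREF.unique {r n : ℕ} {M M' : Matrix (Fin r) (Fin n) F}
    {piv piv' : Fin r → Fin n} (h : IsRREFWithPivots M piv) (h' : IsRREFWithPivots M' piv')
    (hsp : Submodule.span F (Set.range M) = Submodule.span F (Set.range M')) :
    piv = piv' ∧ M = M' := by
  have key : ∀ (A B : Matrix (Fin r) (Fin n) F) (pA pB : Fin r → Fin n),
      IsRREFWithPivots A pA → IsRREFWithPivots B pB →
      Submodule.span F (Set.range A) = Submodule.span F (Set.range B) →
      ∀ i, pA i ∈ Set.range pB := by
    intro A B pA pB hA hB hAB i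
    have hmem : A i ∈ Submodule.span F (Set.range B) := by
      rw [← hAB]; exact Submodule.subset_span ⟨i, rfl⟩
    have hne : A i ≠ 0 := by
      intro hzero
      have := hA.2.1 i
      rw [hzero] at this
      simp at this
    obtain ⟨a, ha1, ha2⟩ := RREF.exists_leading hB hmem hne
    refine ⟨a, ?_⟩
    rcases lt_trichotomy (pB a) (pA i) with hlt | heq | hgt
    · exact absurd (hA.2.2.1 i (pB a) hlt) ha1
    · exact heq
    · have := ha2 (pA i) hgt
      rw [hA.2.1 i] at this
      exact absurd this one_ne_zero
  have hrange : Set.range piv = Set.range piv' := by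
    apply Set.eq_of_subset_of_subset
    · rintro - ⟨i, rfl⟩; exact key M M' piv piv' h h' hsp i
    · rintro - ⟨i, rfl⟩; exact key M' M piv' piv h' h hsp.symm i
  haveI : WellFoundedLT (Fin r) := Finite.to_wellFoundedLT
  have hpiv : piv = piv' := (StrictMono.range_inj h.1 h'.1).mp hrange
  subst hpiv
  refine ⟨rfl, ?_⟩
  funext i
  have hmem : M i - M' i ∈ Submodule.span F (Set.range M) := by
    apply Submodule.sub_mem
    · exact Submodule.subset_span ⟨i, rfl⟩
    · rw [hsp]; exact Submodule.subset_span ⟨i, rfl⟩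
  have hz : ∀ a, (M i - M' i) (piv a) = 0 := by
    intro a
    by_cases hia : a = i
    · subst hia
      have h1 := h.2.1 a
      have h2 := h'.2.1 a
      simp [Pi.sub_apply, h1, h2]
    · have h1 := h.2.2.2 a i (fun hh => hia hh.symm)
      have h2 := h'.2.2.2 a i (fun hh => hia hh.symm)
      simp [Pi.sub_apply, h1, h2]
  have := RREF.eq_zero_of_piv_zero h hmem hz
  exact sub_eq_zero.mp this

/-- Existence of an RREF generator matrix for any `r`-dimensional subspace. -/
lemma RREF.exists_rref {n r : ℕ} (X : Submodule F (Fin n → F))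
    (hX : Module.finrank F X = r) :
    ∃ (M : Matrix (Fin r) (Fin n) F) (piv : Fin r → Fin n),
      IsRREFWithPivots M piv ∧ Submodule.span F (Set.range M) = X := by
  classical
  -- the set of "leading positions" of nonzero elements of X
  set P : Finset (Fin n) :=
    Finset.univ.filter (fun j => ∃ x ∈ X, x j ≠ 0 ∧ ∀ j' < j, x j' = 0) with hPdef
  have hPmem : ∀ j : Fin n, j ∈ P ↔ ∃ x ∈ X, x j ≠ 0 ∧ ∀ j' < j, x j' = 0 := by
    intro j; simp [hPdef]
  -- every nonzero element of X has a first nonzero coordinate, which lies in P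
  have hlead : ∀ x ∈ X, x ≠ 0 → ∃ j ∈ P, x j ≠ 0 ∧ ∀ j' < j, x j' = 0 := by
    intro x hx hx0
    set S : Finset (Fin n) := Finset.univ.filter (fun j => x j ≠ 0) with hS
    have hSne : S.Nonempty := by
      by_contra hne
      apply hx0
      funext j
      by_contra hj
      exact hne ⟨j, by simp only [hS, Finset.mem_filter, Finset.mem_univ, true_and]; simpa using hj⟩
    set j0 := S.min' hSne with hj0
    have hj0mem := S.min'_mem hSne
    have hxj0 : x j0 ≠ 0 := by simpa [hS] using hj0mem
    have hbefore : ∀ j' < j0, x j' = 0 := by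
      intro j' hj'
      by_contra hcon
      have : j' ∈ S := by simp [hS, hcon]
      exact absurd (S.min'_le j' this) (not_le.mpr hj')
    exact ⟨j0, (hPmem j0).mpr ⟨x, hx, hxj0, hbefore⟩, hxj0, hbefore⟩
  haveI : FiniteDimensional F (Fin n → F) := inferInstance
  -- the evaluation map X → (P → F)
  let φ : X →ₗ[F] (↥P → F) :=
    (LinearMap.funLeft F F (fun j : ↥P => (j : Fin n))).comp X.subtype
  have hφinj : Function.Injective φ := by
    rw [← LinearMap.ker_eq_bot, LinearMap.ker_eq_bot']
    intro x hx
    by_contra hx0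
    have hx0' : (x : Fin n → F) ≠ 0 := fun hh => hx0 (Subtype.ext hh)
    obtain ⟨j, hjP, hxj, -⟩ := hlead x x.2 hx0'
    have : φ x ⟨j, hjP⟩ = 0 := by rw [hx]; rfl
    exact hxj this
  -- card bounds
  have hcard_le : P.card ≤ r := by
    -- choose a leading vector for each element of P
    have hch : ∀ j : ↥P, ∃ x : X, (x : Fin n → F) (j : Fin n) ≠ 0 ∧
        ∀ j' < (j : Fin n), (x : Fin n → F) j' = 0 := by
      rintro ⟨j, hj⟩
      obtain ⟨x, hxX, hx1, hx2⟩ := (hPmem j).mp hj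
      exact ⟨⟨x, hxX⟩, hx1, hx2⟩
    choose y hy1 hy2 using hch
    have hli : LinearIndependent F y := by
      rw [Fintype.linearIndependent_iff]
      intro c hc
      by_contra hcon
      push_neg at hcon
      obtain ⟨i, hi⟩ := hcon
      set T : Finset ↥P := Finset.univ.filter (fun j => c j ≠ 0) with hT
      have hTne : T.Nonempty := ⟨i, by simp [hT, hi]⟩
      obtain ⟨j0, hj0T, hj0min⟩ := T.exists_min_image (fun j => (j : Fin n)) hTne
      have hcj0 : c j0 ≠ 0 := by simpa [hT] using hj0T
      have : (∑ j, c j • y j : X) = 0 := hc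
      have heval : ((∑ j, c j • y j : X) : Fin n → F) (j0 : Fin n) = 0 := by
        rw [this]; rfl
      rw [Submodule.coe_sum] at heval
      simp only [Finset.sum_apply, SetLike.val_smul, Pi.smul_apply, smul_eq_mul] at heval
      rw [Finset.sum_eq_single j0] at heval
      · rcases mul_eq_zero.mp heval with h | h
        · exact hcj0 h
        · exact hy1 j0 h
      · intro b _ hb
        by_cases hcb : c b = 0
        · rw [hcb, zero_mul]
        · have hbT : b ∈ T := by simp [hT, hcb]
          have hle : (j0 : Fin n) ≤ (b : Fin n) := hj0min b hbT
          have hne : (j0 : Fin n) ≠ (b : Fin n) := by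
            intro hh
            exact hb (Subtype.ext hh).symm
          have : (j0 : Fin n) < (b : Fin n) := lt_of_le_of_ne hle hne
          rw [hy2 b _ this, mul_zero]
      · simp
    have := LinearIndependent.fintype_card_le_finrank hli
    rwa [Fintype.card_coe, hX] at this
  have hcard_ge : r ≤ P.card := by
    have := LinearMap.finrank_le_finrank_of_injective hφinj
    rwa [hX, Module.finrank_pi, Fintype.card_coe] at this
  have hcard : P.card = r := le_antisymm hcard_le hcard_ge
  -- evaluation is a linear equivalence
  have hfr : Module.finrank F X = Module.finrank F (↥P → F) := by
    rw [hX, Module.finrank_pi, Fintype.card_coe, hcard]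
  let ψ := LinearMap.linearEquivOfInjective φ hφinj hfr
  have hψ : ∀ v, φ (ψ.symm v) = v := fun v => ψ.apply_symm_apply v
  -- the pivots and the matrix
  let e := P.orderIsoOfFin hcard
  let p : Fin r → Fin n := fun i => (e i : Fin n)
  have hpmono : StrictMono p := fun a b hab =>
    show ((e a : ↥P) : Fin n) < ((e b : ↥P) : Fin n) from e.strictMono hab
  let M : Matrix (Fin r) (Fin n) F := fun i => ((ψ.symm (Pi.single (e i) 1) : X) : Fin n → F)
  have hMX : ∀ i, M i ∈ X := fun i => (ψ.symm (Pi.single (e i) 1) : X).2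
  have hMval : ∀ i i', M i (p i') = if i' = i then 1 else 0 := by
    intro i i'
    have := congrFun (hψ (Pi.single (e i) 1)) (e i')
    have heq : φ (ψ.symm (Pi.single (e i) 1)) (e i') = M i (p i') := rfl
    rw [heq] at this
    rw [this, Pi.single_apply]
    by_cases hii : i' = i
    · rw [if_pos (by rw [hii]), if_pos hii]
    · rw [if_neg (fun hh => hii (e.injective hh)), if_neg hii]
  -- M is RREF with pivots p
  have hzero_before : ∀ i j, j < p i → M i j = 0 := by
    intro i j hj
    have hne : M i ≠ 0 := by
      intro hh
      have := hMval i i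
      rw [hh] at this
      simp at this
    obtain ⟨j0, hj0P, hj0ne, hj0before⟩ := hlead (M i) (hMX i) hne
    -- j0 is a pivot position: j0 = p i'' for some i''
    have : ∃ i'', p i'' = j0 := by
      refine ⟨e.symm ⟨j0, hj0P⟩, ?_⟩
      show ((e (e.symm ⟨j0, hj0P⟩) : ↥P) : Fin n) = j0
      rw [OrderIso.apply_symm_apply]
    obtain ⟨i'', hi''⟩ := this
    have hval := hMval i i''
    rw [hi''] at hval
    have : i'' = i := by
      by_contra hii
      rw [if_neg hii] at hval
      exact hj0ne hval
    subst this
    exact hj0before j (hi'' ▸ hj)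
  have hrref : IsRREFWithPivots M p := by
    refine ⟨hpmono, ?_, hzero_before, ?_⟩
    · intro i
      have := hMval i i
      rwa [if_pos rfl] at this
    · intro i i' hii
      have := hMval i' i
      rwa [if_neg (fun hh => hii hh.symm)] at this
  refine ⟨M, p, hrref, ?_⟩
  have hle : Submodule.span F (Set.range M) ≤ X := by
    rw [Submodule.span_le]
    rintro - ⟨i, rfl⟩
    exact hMX i
  haveI : FiniteDimensional F X := FiniteDimensional.finiteDimensional_submodule X
  apply Submodule.eq_of_le_of_finrank_le hle
  rw [hX, RREF.finrank_span hrref]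

variable {n k r : ℕ}

/-- Glue an `r × k` matrix and an `r × (n-k)` matrix into an `r × n` matrix. -/
def extMat (hkn : k ≤ n) (A : Matrix (Fin r) (Fin k) F)
    (B : Matrix (Fin r) (Fin (n - k)) F) : Matrix (Fin r) (Fin n) F :=
  fun i j => if h : (j : ℕ) < k then A i ⟨j, h⟩ else B i ⟨(j : ℕ) - k, by omega⟩

def truncA (hkn : k ≤ n) (M : Matrix (Fin r) (Fin n) F) : Matrix (Fin r) (Fin k) F :=
  fun i j => M i (Fin.castLE hkn j)

def truncB (hkn : k ≤ n) (M : Matrix (Fin r) (Fin n) F) : Matrix (Fin r) (Fin (n - k)) F :=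
  fun i j => M i ⟨k + (j : ℕ), by omega⟩

lemma extMat_truncs (hkn : k ≤ n) (M : Matrix (Fin r) (Fin n) F) :
    extMat hkn (truncA hkn M) (truncB hkn M) = M := by
  funext i j
  show (if h : (j : ℕ) < k then truncA hkn M i ⟨j, h⟩ else truncB hkn M i ⟨(j : ℕ) - k, by omega⟩) = M i j
  by_cases h : (j : ℕ) < k
  · rw [dif_pos h]
    show M i (Fin.castLE hkn ⟨(j : ℕ), h⟩) = M i j
    congr 1
  · rw [dif_neg h]
    show M i ⟨k + ((j : ℕ) - k), by omega⟩ = M i j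
    congr 1
    apply Fin.ext
    show k + ((j : ℕ) - k) = (j : ℕ)
    omega

lemma truncA_ext (hkn : k ≤ n) (A : Matrix (Fin r) (Fin k) F)
    (B : Matrix (Fin r) (Fin (n - k)) F) : truncA hkn (extMat hkn A B) = A := by
  funext i j
  show (if h : ((Fin.castLE hkn j : Fin n) : ℕ) < k then A i ⟨(Fin.castLE hkn j : Fin n), h⟩
      else B i ⟨((Fin.castLE hkn j : Fin n) : ℕ) - k, by omega⟩) = A i j
  rw [dif_pos (show ((Fin.castLE hkn j : Fin n) : ℕ) < k from j.isLt)]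
  congr 1

lemma truncB_ext (hkn : k ≤ n) (A : Matrix (Fin r) (Fin k) F)
    (B : Matrix (Fin r) (Fin (n - k)) F) : truncB hkn (extMat hkn A B) = B := by
  funext i j
  show (if h : ((⟨k + (j : ℕ), by omega⟩ : Fin n) : ℕ) < k then A i ⟨((⟨k + (j : ℕ), by omega⟩ : Fin n) : ℕ), h⟩
      else B i ⟨((⟨k + (j : ℕ), by omega⟩ : Fin n) : ℕ) - k, by omega⟩) = B i j
  rw [dif_neg (by simp)]
  congr 1
  apply Fin.ext
  show k + (j : ℕ) - k = (j : ℕ)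
  omega

lemma extMat_rref (hkn : k ≤ n) {A : Matrix (Fin r) (Fin k) F}
    {B : Matrix (Fin r) (Fin (n - k)) F} {pivA : Fin r → Fin k}
    (hA : IsRREFWithPivots A pivA) :
    IsRREFWithPivots (extMat hkn A B) (fun i => Fin.castLE hkn (pivA i)) := by
  obtain ⟨hs, h1, h0, hc⟩ := hA
  have hval : ∀ (i : Fin r) (j : Fin n) (h : (j : ℕ) < k), extMat hkn A B i j = A i ⟨(j : ℕ), h⟩ := by
    intro i j h
    show (if h' : (j : ℕ) < k then A i ⟨(j : ℕ), h'⟩ else B i ⟨(j : ℕ) - k, by omega⟩) = A i ⟨(j : ℕ), h⟩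
    rw [dif_pos h]
  refine ⟨fun a b hab => ?_, fun i => ?_, fun i j hj => ?_, fun i i' hii => ?_⟩
  · exact hs hab
  · rw [hval i (Fin.castLE hkn (pivA i)) (by simpa using (pivA i).isLt)]
    convert h1 i using 2
    exact Fin.ext rfl
  · have hjk : (j : ℕ) < k := lt_of_lt_of_le (show (j : ℕ) < (pivA i : ℕ) from hj) (le_of_lt (pivA i).isLt)
    rw [hval i j hjk]
    exact h0 i ⟨j, hjk⟩ hj
  · rw [hval i' (Fin.castLE hkn (pivA i)) (by simpa using (pivA i).isLt)]
    convert hc i i' hii using 2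
    exact Fin.ext rfl

lemma truncA_rref (hkn : k ≤ n) {M : Matrix (Fin r) (Fin n) F} {piv : Fin r → Fin n}
    (hM : IsRREFWithPivots M piv) (hpk : ∀ i, (piv i : ℕ) < k) :
    IsRREFWithPivots (truncA hkn M) (fun i => ⟨(piv i : ℕ), hpk i⟩) := by
  obtain ⟨hs, h1, h0, hc⟩ := hM
  refine ⟨fun a b hab => ?_, fun i => ?_, fun i j hj => ?_, fun i i' hii => ?_⟩
  · exact hs hab
  · show M i (Fin.castLE hkn ⟨(piv i : ℕ), hpk i⟩) = 1
    convert h1 i using 2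
    exact Fin.ext rfl
  · show M i (Fin.castLE hkn j) = 0
    exact h0 i (Fin.castLE hkn j) hj
  · show M i' (Fin.castLE hkn ⟨(piv i : ℕ), hpk i⟩) = 0
    convert hc i i' hii using 2
    exact Fin.ext rfl

end Aux

/-- For `0 ≤ r ≤ k ≤ n`, the number of `r`-dimensional
subspaces `X` of `F_q^n` whose identifying vector is supported in the first
`k` coordinates equals `[k choose r]_q * q^(r(n-k))`, where the Gaussian
binomial coefficient `[k choose r]_q` is the number of `r`-dimensional
subspaces of `F_q^k`. -/
theorem card_subspaces_idVec_supported_initial {F : Type*} [Field F] [Fintype F]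
    {n k r : ℕ} (hrk : r ≤ k) (hkn : k ≤ n) :
    Nat.card {X : Submodule F (Fin n → F) //
        Module.finrank F X = r ∧
        ∃ (M : Matrix (Fin r) (Fin n) F) (piv : Fin r → Fin n),
          IsRREFWithPivots M piv ∧ Submodule.span F (Set.range M) = X ∧
          ∀ i, (piv i : ℕ) < k} =
      Nat.card {W : Submodule F (Fin k → F) // Module.finrank F W = r} *
        Fintype.card F ^ (r * (n - k)) := by
  classical
  set S := {X : Submodule F (Fin n → F) //
      Module.finrank F X = r ∧
      ∃ (M : Matrix (Fin r) (Fin n) F) (piv : Fin r → Fin n),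
        IsRREFWithPivots M piv ∧ Submodule.span F (Set.range M) = X ∧
        ∀ i, (piv i : ℕ) < k} with hS
  set T := {W : Submodule F (Fin k → F) // Module.finrank F W = r} with hT
  -- the chosen RREF of each element of T
  have hex : ∀ W : T, ∃ Ap : (Matrix (Fin r) (Fin k) F) × (Fin r → Fin k),
      IsRREFWithPivots Ap.1 Ap.2 ∧ Submodule.span F (Set.range Ap.1) = W.1 := by
    intro W
    obtain ⟨M, piv, h1, h2⟩ := RREF.exists_rref W.1 W.2
    exact ⟨(M, piv), h1, h2⟩
  choose Ap hAp hApSpan using hex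
  -- the bijection
  let g : T × (Matrix (Fin r) (Fin (n - k)) F) → S := fun p =>
    ⟨Submodule.span F (Set.range (extMat hkn (Ap p.1).1 p.2)),
      by
        constructor
        · exact RREF.finrank_span (extMat_rref hkn (hAp p.1))
        · exact ⟨extMat hkn (Ap p.1).1 p.2, fun i => Fin.castLE hkn ((Ap p.1).2 i),
            extMat_rref hkn (hAp p.1), rfl, fun i => by simpa using ((Ap p.1).2 i).isLt⟩⟩
  have hg : Function.Bijective g := by
    constructor
    · rintro ⟨W, B⟩ ⟨W', B'⟩ hgeq
      have hspan : Submodule.span F (Set.range (extMat hkn (Ap W).1 B)) =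
          Submodule.span F (Set.range (extMat hkn (Ap W').1 B')) :=
        congrArg Subtype.val hgeq
      obtain ⟨-, hMeq⟩ := RREF.unique (extMat_rref hkn (hAp W)) (extMat_rref hkn (hAp W')) hspan
      have hAeq : (Ap W).1 = (Ap W').1 := by
        have := congrArg (truncA hkn) hMeq
        rwa [truncA_ext, truncA_ext] at this
      have hBeq : B = B' := by
        have := congrArg (truncB hkn) hMeq
        rwa [truncB_ext, truncB_ext] at this
      have hWeq : W = W' := by
        apply Subtype.ext
        rw [← hApSpan W, ← hApSpan W', hAeq]
      rw [Prod.mk.injEq]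
      exact ⟨hWeq, hBeq⟩
    · rintro ⟨X, hXr, M, piv, hM, hMX, hpk⟩
      set A := truncA hkn M with hA
      set B := truncB hkn M with hB
      have hArref : IsRREFWithPivots A (fun i => ⟨(piv i : ℕ), hpk i⟩) := truncA_rref hkn hM hpk
      set W : Submodule F (Fin k → F) := Submodule.span F (Set.range A) with hW
      have hWr : Module.finrank F W = r := RREF.finrank_span hArref
      set w : T := ⟨W, hWr⟩ with hw
      -- the chosen RREF of W equals A
      have huniq := RREF.unique (hAp w) hArref (by rw [hApSpan w])
      refine ⟨⟨w, B⟩, ?_⟩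
      apply Subtype.ext
      show Submodule.span F (Set.range (extMat hkn (Ap w).1 B)) = X
      rw [huniq.2, hA, hB, extMat_truncs, hMX]
  rw [← Nat.card_eq_of_bijective g hg, Nat.card_prod]
  congr 1
  rw [Nat.card_eq_fintype_card]
  show Fintype.card (Fin r → Fin (n - k) → F) = Fintype.card F ^ (r * (n - k))
  rw [Fintype.card_fun, Fintype.card_fun, Fintype.card_fin, Fintype.card_fin, ← pow_mul,
    mul_comm (n - k) r]
end

section
/- Let C be an (n, M, d=2δ, k)_q constant dimension code with 1 ≤ δ, δ−1 ≤ k−δ, and k+δ ≤ n. Let v_2 be the binary vector of length n consisting of k−δ ones, then δ zeros, then δ ones (in positions k+1,...,k+δ), then n−k−δ zeros, and let C_2 = { X ∈ C : v(X) = v_2 }. If |C_2| = q^{(k−δ+1)(n−k)−δ²}, then every codeword Y ∈ C whose identifying vector v(Y) has ones in all of the positions k+1,...,k+δ and satisfies d_H(v(Y), v_2) < 2δ must have v(Y) = v_2 (i.e., Y ∈ C_2). -/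
section Aux
variable {F : Type*} [Field F] {k n : ℕ}

lemma rref_sum_apply_piv {M : Matrix (Fin k) (Fin n) F} {piv : Fin k → Fin n}
    (h : IsRREFWithPivots M piv) (c : Fin k → F) (i : Fin k) :
    (∑ l, c l • M l) (piv i) = c i := by
  obtain ⟨hm, h1, h0, hc⟩ := h
  rw [Finset.sum_apply]
  rw [Finset.sum_eq_single i]
  · simp [h1 i]
  · intro l _ hl; simp [hc i l hl]
  · simp

lemma rref_mem_span {M : Matrix (Fin k) (Fin n) F} {piv : Fin k → Fin n}
    (h : IsRREFWithPivots M piv) {x : Fin n → F}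
    (hx : x ∈ Submodule.span F (Set.range M)) :
    x = ∑ l, x (piv l) • M l := by
  obtain ⟨c, hc⟩ := (Submodule.mem_span_range_iff_exists_fun F).mp hx
  have hcl : ∀ l, x (piv l) = c l := by
    intro l; rw [← hc]; exact rref_sum_apply_piv h c l
  have : ∑ l, x (piv l) • M l = ∑ l, c l • M l :=
    Finset.sum_congr rfl fun l _ => by rw [hcl l]
  rw [this, hc]

lemma rref_leading {M : Matrix (Fin k) (Fin n) F} {piv : Fin k → Fin n}
    (h : IsRREFWithPivots M piv) {x : Fin n → F}
    (hx : x ∈ Submodule.span F (Set.range M)) {j : Fin n}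
    (h0 : ∀ j' : Fin n, j' < j → x j' = 0) (hj : x j ≠ 0) : ∃ i, piv i = j := by
  by_contra hcon
  push_neg at hcon
  apply hj
  have hxe := rref_mem_span h hx
  calc x j = (∑ l, x (piv l) • M l) j := by rw [← hxe]
    _ = ∑ l, x (piv l) * M l j := by rw [Finset.sum_apply]; rfl
    _ = 0 := by
        apply Finset.sum_eq_zero
        intro l _
        rcases lt_trichotomy (piv l) j with hlt | heq | hgt
        · rw [h0 _ hlt, zero_mul]
        · exact absurd heq (hcon l)
        · rw [h.2.2.1 l j hgt, mul_zero]

lemma strictMono_range_unique {f g : Fin k → Fin n} (hf : StrictMono f) (hg : StrictMono g)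
    (h : ∀ j, (∃ i, f i = j) ↔ ∃ i, g i = j) : f = g := by
  have key : ∀ N : ℕ, ∀ i : Fin k, (i : ℕ) < N → f i = g i := by
    intro N
    induction N with
    | zero => intro i hi; omega
    | succ N IHN =>
    intro i hiN
    have IH : ∀ m : Fin k, m < i → f m = g m := fun m hm =>
      IHN m (by have : (m : ℕ) < (i : ℕ) := hm; omega)
    obtain ⟨m, hm⟩ := (h (f i)).mp ⟨i, rfl⟩
    rcases lt_trichotomy m i with hmi | hmi | hmi
    · exfalso
      have := IH m hmi
      have : f m = f i := by rw [this, hm]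
      exact absurd (hf.injective this) (Nat.ne_of_lt hmi ∘ congrArg Fin.val)
    · subst hmi; exact hm.symm
    · exfalso
      obtain ⟨m', hm'⟩ := (h (g i)).mpr ⟨i, rfl⟩
      rcases lt_trichotomy m' i with hmi' | hmi' | hmi'
      · have := IH m' hmi'
        have : g m' = g i := by rw [← this, hm']
        exact absurd (hg.injective this) (Nat.ne_of_lt hmi' ∘ congrArg Fin.val)
      · rw [hmi'] at hm'
        have hgg : g m = g i := by rw [hm, hm']
        exact absurd (hg.injective hgg) (ne_of_gt hmi)
      · have h1 : g i < g m := hg hmi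
        have h2 : f i < f m' := hf hmi'
        rw [hm] at h1
        rw [hm'] at h2
        exact lt_irrefl _ (h1.trans h2)
  funext i
  exact key ((i : ℕ) + 1) i (Nat.lt_succ_self _)

end Aux

set_option maxHeartbeats 2000000 in
/-- **Lemma 6 of the paper.** Let `C` be an `(n, M, d = 2δ, k)_q`
constant dimension code with `1 ≤ δ`, `δ - 1 ≤ k - δ` and `k + δ ≤ n`. Let
`v₂ = 1^(k-δ) 0^δ 1^δ 0^(n-k-δ)` and `C₂ = {X ∈ C : v(X) = v₂}`. If
`|C₂| = q^((k-δ+1)(n-k) - δ²)`, then every codeword `Y ∈ C` whose identifying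
vector has ones in all positions `k+1, …, k+δ` (0-indexed: `k, …, k+δ-1`) and
satisfies `d_H(v(Y), v₂) < 2δ` must have `v(Y) = v₂`. -/
theorem no_close_identifying_vector_second {F : Type*} [Field F] [Fintype F]
    {n k δ : ℕ} (hδ1 : 1 ≤ δ) (hδk : δ - 1 ≤ k - δ) (hkn : k + δ ≤ n)
    (C : Set (Submodule F (Fin n → F)))
    (hdim : ∀ X ∈ C, Module.finrank F X = k)
    (hdist : ∀ X ∈ C, ∀ Y ∈ C, X ≠ Y → 2 * δ ≤ subDist X Y)
    (v2 : Fin n → Bool)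
    (hv2 : v2 = fun j : Fin n =>
      decide ((j : ℕ) < k - δ ∨ (k ≤ (j : ℕ) ∧ (j : ℕ) < k + δ)))
    (hC2 : Nat.card ↥{X | X ∈ C ∧
        ∃ (M : Matrix (Fin k) (Fin n) F) (piv : Fin k → Fin n),
          IsRREFWithPivots M piv ∧ Submodule.span F (Set.range M) = X ∧
          idVec piv = v2} =
      Fintype.card F ^ ((k - δ + 1) * (n - k) - δ ^ 2)) :
    ∀ Y ∈ C, ∀ (MY : Matrix (Fin k) (Fin n) F) (pivY : Fin k → Fin n),
      IsRREFWithPivots MY pivY → Submodule.span F (Set.range MY) = Y →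
      (∀ j : Fin n, k ≤ (j : ℕ) → (j : ℕ) < k + δ → idVec pivY j = true) →
      hammingDist (idVec pivY) v2 < 2 * δ → idVec pivY = v2 := by
  classical
  intro Y hY MY pivY hRY hspanY hones hham
  by_contra hne
  obtain ⟨hmY, h1Y, h0Y, hcY⟩ := id hRY
  have hv2j : ∀ j : Fin n, (v2 j = true) ↔
      ((j : ℕ) < k - δ ∨ (k ≤ (j : ℕ) ∧ (j : ℕ) < k + δ)) := by
    intro j; rw [hv2]; simp
  -- ρ : bottom pivot rows of Y
  have hρ : ∀ r : Fin δ, ∃ i : Fin k, pivY i = ⟨k + (r : ℕ), by omega⟩ := by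
    intro r
    have hj := hones ⟨k + (r : ℕ), by omega⟩ (by simp) (by simpa using r.isLt)
    simpa [idVec] using hj
  choose ρ hρval using hρ
  have hρv : ∀ r : Fin δ, (pivY (ρ r) : ℕ) = k + (r : ℕ) := by
    intro r; rw [hρval r]
  have hρinj : Function.Injective ρ := by
    intro r r' hrr
    have : (pivY (ρ r) : ℕ) = (pivY (ρ r') : ℕ) := by rw [hrr]
    rw [hρv, hρv] at this
    exact Fin.ext (by omega)
  have hδle : δ ≤ k := by simpa using Fintype.card_le_of_injective ρ hρinj
  have hk2δ : 2 * δ - 1 ≤ k := by omega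
  -- the canonical pivot function for v2
  set pV : Fin k → Fin n := fun i =>
    ⟨if (i : ℕ) < k - δ then (i : ℕ) else (i : ℕ) + δ, by
      have := i.isLt; split <;> omega⟩ with hpVdef
  have hpVval : ∀ i : Fin k, (pV i : ℕ) = if (i : ℕ) < k - δ then (i : ℕ) else (i : ℕ) + δ := by
    intro i; rfl
  have hpVval' : ∀ (m : ℕ) (h : m < k), ((pV ⟨m, h⟩ : Fin n) : ℕ) = if m < k - δ then m else m + δ := by
    intro m h; rfl
  have hpVmono : StrictMono pV := by
    intro i i' hlt
    have hlt' : (i : ℕ) < (i' : ℕ) := hlt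
    have h1 := i.isLt; have h2 := i'.isLt
    simp only [Fin.lt_def, hpVval]
    split <;> split <;> omega
  have hpVrange : ∀ j : Fin n, (∃ i, pV i = j) ↔
      ((j : ℕ) < k - δ ∨ (k ≤ (j : ℕ) ∧ (j : ℕ) < k + δ)) := by
    intro j
    constructor
    · rintro ⟨i, rfl⟩
      have := i.isLt
      rw [hpVval]
      split <;> omega
    · intro hj
      rcases hj with hj | hj
      · refine ⟨⟨(j : ℕ), by omega⟩, Fin.ext ?_⟩
        rw [hpVval']
        simp only [if_pos hj]
      · refine ⟨⟨(j : ℕ) - δ, by omega⟩, Fin.ext ?_⟩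
        rw [hpVval']
        have hneg : ¬ ((j : ℕ) - δ < k - δ) := by omega
        rw [if_neg hneg]
        omega
  have hidpV : idVec pV = v2 := by
    funext j
    have := hpVrange j
    simp only [idVec]
    rw [hv2]
    simp only [decide_eq_decide]
    exact this
  -- counting: at least k - 2δ + 1 rows of Y have pivot < k - δ
  set T : Finset (Fin k) := Finset.univ.filter (fun i => (pivY i : ℕ) < k - δ) with hTdef
  have hTcard : k - δ + 1 - δ ≤ T.card := by
    set s : Finset (Fin n) := Finset.univ.filter (fun j => ∃ i, pivY i = j) with hsdef
    set t : Finset (Fin n) := Finset.univ.filter (fun j => ∃ i, pV i = j) with htdef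
    have hscard : s.card = k := by
      have : s = Finset.image pivY Finset.univ := by
        ext j
        simp only [hsdef, Finset.mem_filter, Finset.mem_univ, true_and, Finset.mem_image]
      rw [this, Finset.card_image_of_injective _ hmY.injective, Finset.card_univ,
        Fintype.card_fin]
    have htcard : t.card = k := by
      have : t = Finset.image pV Finset.univ := by
        ext j
        simp only [htdef, Finset.mem_filter, Finset.mem_univ, true_and, Finset.mem_image]
      rw [this, Finset.card_image_of_injective _ hpVmono.injective, Finset.card_univ,
        Fintype.card_fin]
    have hPQ : ∀ P Q : Prop, (¬(P ↔ Q)) ↔ ((P ∧ ¬Q) ∨ (Q ∧ ¬P)) := by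
      intro P Q
      by_cases hP : P <;> by_cases hQ : Q <;> simp [hP, hQ]
    have hDeq : (Finset.univ.filter (fun j => idVec pivY j ≠ v2 j)) = (s \ t) ∪ (t \ s) := by
      ext j
      simp only [Finset.mem_filter, Finset.mem_union, Finset.mem_sdiff, Finset.mem_univ,
        true_and, hsdef, htdef]
      rw [← hidpV]
      simp only [idVec, Ne, decide_eq_decide]
      exact hPQ _ _
    have hdisj : Disjoint (s \ t) (t \ s) := by
      rw [Finset.disjoint_left]
      intro x hx hx'
      simp only [Finset.mem_sdiff] at hx hx'
      exact hx.2 hx'.1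
    have hhd : hammingDist (idVec pivY) v2 = ((s \ t) ∪ (t \ s)).card := by
      rw [hammingDist, ← hDeq]
    have hham2 : (s \ t).card + (t \ s).card < 2 * δ := by
      rw [hhd, Finset.card_union_of_disjoint hdisj] at hham
      exact hham
    have h1 : (s \ t).card + (s ∩ t).card = s.card := Finset.card_sdiff_add_card_inter s t
    have h2 : (t \ s).card + (t ∩ s).card = t.card := Finset.card_sdiff_add_card_inter t s
    have hints : (t ∩ s).card = (s ∩ t).card := by rw [Finset.inter_comm]
    -- bound (s ∩ t).card ≤ T.card + δ
    have hbound : (s ∩ t).card ≤ T.card + δ := by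
      have hsub : s ∩ t ⊆ Finset.image pivY T ∪
          Finset.image (fun r : Fin δ => (⟨k + (r : ℕ), by omega⟩ : Fin n)) Finset.univ := by
        intro j hj
        simp only [Finset.mem_inter, Finset.mem_filter, Finset.mem_univ, true_and,
          hsdef, htdef] at hj
        obtain ⟨⟨i, hi⟩, hjt⟩ := hj
        rw [hpVrange] at hjt
        rcases hjt with hjt | hjt
        · apply Finset.mem_union_left
          apply Finset.mem_image.mpr
          exact ⟨i, by simp [hTdef, hi, hjt], hi⟩
        · apply Finset.mem_union_right
          apply Finset.mem_image.mpr
          refine ⟨⟨(j : ℕ) - k, by omega⟩, Finset.mem_univ _, Fin.ext ?_⟩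
          simp; omega
      calc (s ∩ t).card ≤ _ := Finset.card_le_card hsub
        _ ≤ (Finset.image pivY T).card +
            (Finset.image (fun r : Fin δ => (⟨k + (r : ℕ), by omega⟩ : Fin n)) Finset.univ).card :=
          Finset.card_union_le _ _
        _ ≤ T.card + δ := by
          gcongr
          · exact le_of_eq (Finset.card_image_of_injective _ hmY.injective)
          · calc _ ≤ (Finset.univ : Finset (Fin δ)).card := Finset.card_image_le
              _ = δ := by simp
    omega
  set a := k - δ + 1 - δ with hadef
  -- extract a rows of Y with pivot < k - δ
  obtain ⟨T', hT'sub, hT'card⟩ := Finset.exists_subset_card_eq hTcard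
  set ι : Fin a → Fin k := fun s => ((T'.equivFinOfCardEq hT'card).symm s : Fin k) with hιdef
  have hιinj : Function.Injective ι := by
    intro s s' hss
    have := (T'.equivFinOfCardEq hT'card).symm.injective (Subtype.ext hss)
    exact this
  have hιlt : ∀ s : Fin a, (pivY (ι s) : ℕ) < k - δ := by
    intro s
    have hmem := hT'sub ((T'.equivFinOfCardEq hT'card).symm s).2
    simp only [hTdef, Finset.mem_filter] at hmem
    exact hmem.2
  have hιρ : ∀ (s : Fin a) (r : Fin δ), ι s ≠ ρ r := by
    intro s r h
    have h1 := hιlt s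
    have h2 := hρv r
    rw [h] at h1
    omega
  -- bottom row indices and column embeddings
  set botIdx : Fin δ → Fin k := fun r => ⟨k - δ + (r : ℕ), by have := r.isLt; omega⟩ with hbotdef
  have hpVbot : ∀ r : Fin δ, ((pV (botIdx r) : Fin n) : ℕ) = k + (r : ℕ) := by
    intro r
    have h1 : ¬ (k - δ + (r : ℕ) < k - δ) := by omega
    rw [show ((pV (botIdx r) : Fin n) : ℕ) = if k - δ + (r : ℕ) < k - δ then k - δ + (r : ℕ)
        else k - δ + (r : ℕ) + δ from rfl, if_neg h1]
    omega
  have hpVtop : ∀ (l : Fin k), (l : ℕ) < k - δ → ((pV l : Fin n) : ℕ) = (l : ℕ) := by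
    intro l hl
    rw [hpVval]
    simp [hl]
  set fcol : Fin (n - k) → Fin n := fun j =>
    ⟨if (j : ℕ) < δ then k - δ + (j : ℕ) else k + (j : ℕ), by
      have := j.isLt; split <;> omega⟩ with hfdef
  have hfval : ∀ j : Fin (n - k), ((fcol j : Fin n) : ℕ) =
      if (j : ℕ) < δ then k - δ + (j : ℕ) else k + (j : ℕ) := fun j => rfl
  set bcol : Fin (n - (k + δ)) → Fin n := fun j =>
    ⟨k + δ + (j : ℕ), by have := j.isLt; omega⟩ with hbdef
  have hbval : ∀ j : Fin (n - (k + δ)), ((bcol j : Fin n) : ℕ) = k + δ + (j : ℕ) := fun j => rfl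
  have colCases : ∀ j : Fin n, (∃ l, pV l = j) ∨ (∃ j', fcol j' = j) := by
    intro j
    by_cases h1 : (j : ℕ) < k - δ
    · exact Or.inl ((hpVrange j).mpr (Or.inl h1))
    by_cases h2 : (j : ℕ) < k
    · refine Or.inr ⟨⟨(j : ℕ) - (k - δ), by omega⟩, Fin.ext ?_⟩
      rw [hfval]
      have : ((⟨(j : ℕ) - (k - δ), by omega⟩ : Fin (n - k)) : ℕ) = (j : ℕ) - (k - δ) := rfl
      rw [this]
      have h3 : (j : ℕ) - (k - δ) < δ := by omega
      rw [if_pos h3]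
      omega
    by_cases h3 : (j : ℕ) < k + δ
    · exact Or.inl ((hpVrange j).mpr (Or.inr ⟨by omega, h3⟩))
    · refine Or.inr ⟨⟨(j : ℕ) - k, by omega⟩, Fin.ext ?_⟩
      rw [hfval]
      have h4 : ¬ ((j : ℕ) - k < δ) := by omega
      have : ((⟨(j : ℕ) - k, by omega⟩ : Fin (n - k)) : ℕ) = (j : ℕ) - k := rfl
      rw [this, if_neg h4]
      omega
  -- structure of members of C₂
  set C2 : Set (Submodule F (Fin n → F)) := {X | X ∈ C ∧
      ∃ (M : Matrix (Fin k) (Fin n) F) (piv : Fin k → Fin n),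
        IsRREFWithPivots M piv ∧ Submodule.span F (Set.range M) = X ∧
        idVec piv = v2} with hC2def
  have getM : ∀ X ∈ C2, ∃ MX : Matrix (Fin k) (Fin n) F,
      IsRREFWithPivots MX pV ∧ Submodule.span F (Set.range MX) = X := by
    rintro X ⟨hXC, M, piv, hR, hsp, hid⟩
    have hpiv : piv = pV := by
      refine strictMono_range_unique hR.1 hpVmono ?_
      intro j
      rw [hpVrange]
      have := congrFun hid j
      rw [hv2] at this
      simp only [idVec, decide_eq_decide] at this
      exact this
    exact ⟨M, hpiv ▸ hR, hsp⟩
  choose MXf hMXrref hMXspan using getM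
  have hRA0 : ∀ X hX, IsRREFWithPivots (MXf X hX) pV := hMXrref
  -- the projection map π
  set π : ↥C2 → (Fin a → Fin (n - k) → F) × (Fin δ → Fin (n - (k + δ)) → F) := fun X =>
    (fun s j => (∑ l, MY (ι s) (pV l) • MXf X.1 X.2 l) (fcol j),
     fun r j => MXf X.1 X.2 (botIdx r) (bcol j)) with hπdef
  have hπinj : Function.Injective π := by
    rintro ⟨X, hX⟩ ⟨X', hX'⟩ hEq
    simp only [hπdef, Prod.mk.injEq] at hEq
    set A := MXf X hX with hAdef
    set A' := MXf X' hX' with hA'def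
    have hRA := hMXrref X hX
    have hRA' := hMXrref X' hX'
    have hspA := hMXspan X hX
    have hspA' := hMXspan X' hX'
    rw [← hAdef] at hRA hspA
    rw [← hA'def] at hRA' hspA'
    have hEq1 : ∀ s j, (∑ l, MY (ι s) (pV l) • A l) (fcol j)
        = (∑ l, MY (ι s) (pV l) • A' l) (fcol j) := by
      intro s j
      exact congrFun (congrFun hEq.1 s) j
    have hEq2 : ∀ r j, A (botIdx r) (bcol j) = A' (botIdx r) (bcol j) := by
      intro r j
      exact congrFun (congrFun hEq.2 r) j
    have hbot : ∀ r : Fin δ, A (botIdx r) = A' (botIdx r) := by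
      intro r
      funext j
      rcases colCases j with ⟨l, rfl⟩ | ⟨j', rfl⟩
      · by_cases hl : l = botIdx r
        · subst hl; rw [hRA.2.1, hRA'.2.1]
        · rw [hRA.2.2.2 l (botIdx r) (Ne.symm hl), hRA'.2.2.2 l (botIdx r) (Ne.symm hl)]
      · by_cases hj : (j' : ℕ) < δ
        · have hlt : (fcol j') < pV (botIdx r) := by
            rw [Fin.lt_def, hfval, hpVbot, if_pos hj]
            omega
          rw [hRA.2.2.1 _ _ hlt, hRA'.2.2.1 _ _ hlt]
        · have hfb : fcol j' = bcol ⟨(j' : ℕ) - δ, by have := j'.isLt; omega⟩ := by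
            apply Fin.ext
            rw [hfval, hbval, if_neg hj]
            have : ((⟨(j' : ℕ) - δ, by have := j'.isLt; omega⟩ : Fin (n - (k + δ))) : ℕ)
              = (j' : ℕ) - δ := rfl
            rw [this]
            omega
          rw [hfb]
          exact hEq2 r _
    have htop : ∀ s : Fin a, (∑ l, MY (ι s) (pV l) • A l) = (∑ l, MY (ι s) (pV l) • A' l) := by
      intro s
      funext j
      rcases colCases j with ⟨l, rfl⟩ | ⟨j', rfl⟩
      · rw [rref_sum_apply_piv hRA, rref_sum_apply_piv hRA']
      · exact hEq1 s j'
    set z : (Fin a ⊕ Fin δ) → (Fin n → F) := Sum.elim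
      (fun s => ∑ l, MY (ι s) (pV l) • A l) (fun r => A (botIdx r)) with hzdef
    have hzX : ∀ i, z i ∈ X := by
      rintro (s | r)
      · rw [← hspA]
        exact Submodule.sum_mem _ fun l _ =>
          Submodule.smul_mem _ _ (Submodule.subset_span ⟨l, rfl⟩)
      · rw [← hspA]
        exact Submodule.subset_span ⟨botIdx r, rfl⟩
    have hzX' : ∀ i, z i ∈ X' := by
      rintro (s | r)
      · show (∑ l, MY (ι s) (pV l) • A l) ∈ X'
        rw [htop s, ← hspA']
        exact Submodule.sum_mem _ fun l _ =>
          Submodule.smul_mem _ _ (Submodule.subset_span ⟨l, rfl⟩)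
      · show A (botIdx r) ∈ X'
        rw [hbot r, ← hspA']
        exact Submodule.subset_span ⟨botIdx r, rfl⟩
    set tc : (Fin a ⊕ Fin δ) → Fin k := Sum.elim
      (fun s => ⟨(pivY (ι s) : ℕ), by have := hιlt s; omega⟩) botIdx with htcdef
    have hpVtc1 : ∀ s : Fin a, pV (tc (Sum.inl s)) = pivY (ι s) := by
      intro s
      apply Fin.ext
      rw [show tc (Sum.inl s) = ⟨(pivY (ι s) : ℕ), by have := hιlt s; omega⟩ from rfl]
      rw [hpVval']
      simp [hιlt s]
    have hpVtc2 : ∀ r : Fin δ, pV (tc (Sum.inr r)) = pivY (ρ r) := by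
      intro r
      apply Fin.ext
      rw [show tc (Sum.inr r) = botIdx r from rfl, hpVbot, hρv]
    have hbotne : ∀ (s : Fin a) (r : Fin δ), tc (Sum.inl s) ≠ botIdx r := by
      intro s r h
      have h1 : (tc (Sum.inl s) : ℕ) = (pivY (ι s) : ℕ) := rfl
      have h2 : (botIdx r : ℕ) = k - δ + (r : ℕ) := rfl
      rw [h, h2] at h1
      have := hιlt s
      omega
    have hzc : ∀ i i0, z i (pV (tc i0)) = if i = i0 then 1 else 0 := by
      rintro (s | r) (s' | r')
      · show (∑ l, MY (ι s) (pV l) • A l) (pV (tc (Sum.inl s'))) = _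
        rw [rref_sum_apply_piv hRA, hpVtc1]
        by_cases hss : s = s'
        · subst hss; simp [h1Y]
        · have hne2 : ι s ≠ ι s' := fun h => hss (hιinj h)
          rw [hcY (ι s') (ι s) hne2]
          simp [hss]
      · show (∑ l, MY (ι s) (pV l) • A l) (pV (tc (Sum.inr r'))) = _
        rw [rref_sum_apply_piv hRA, hpVtc2]
        rw [hcY (ρ r') (ι s) (hιρ s r')]
        simp
      · show A (botIdx r) (pV (tc (Sum.inl s'))) = _
        rw [hRA.2.2.2 (tc (Sum.inl s')) (botIdx r) (Ne.symm (hbotne s' r))]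
        simp
      · show A (botIdx r) (pV (tc (Sum.inr r'))) = _
        show A (botIdx r) (pV (botIdx r')) = _
        by_cases hrr : r = r'
        · subst hrr; simp [hRA.2.1]
        · have : botIdx r ≠ botIdx r' := by
            intro h
            have h1 : k - δ + (r : ℕ) = k - δ + (r' : ℕ) := congrArg Fin.val h
            exact hrr (Fin.ext (by omega))
          rw [hRA.2.2.2 (botIdx r') (botIdx r) this]
          simp [hrr]
    have hzind : LinearIndependent F z := by
      rw [Fintype.linearIndependent_iff]
      intro g hg i0
      have hcol := congrFun hg (pV (tc i0))
      rw [Finset.sum_apply] at hcol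
      simp only [Pi.smul_apply, smul_eq_mul] at hcol
      rw [Finset.sum_congr rfl (fun i _ => by rw [hzc i i0])] at hcol
      simpa using hcol
    have hmemz : ∀ i, z i ∈ X ⊓ X' := fun i => ⟨hzX i, hzX' i⟩
    have hindsub : LinearIndependent F (fun i => (⟨z i, hmemz i⟩ : ↥(X ⊓ X'))) :=
      LinearIndependent.of_comp ((X ⊓ X').subtype) (by exact hzind)
    have hfr : a + δ ≤ Module.finrank F ↥(X ⊓ X') := by
      have := hindsub.fintype_card_le_finrank
      simpa using this
    apply Subtype.ext
    by_contra hne'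
    have h2d := hdist X hX.1 X' hX'.1 hne'
    have hsd : subDist X X' = k + k - 2 * Module.finrank F ↥(X ⊓ X') := by
      rw [subDist, hdim X hX.1, hdim X' hX'.1]
    rw [hsd] at h2d
    omega
  -- cardinality of the codomain
  have hexp : (n - k) * a + (n - (k + δ)) * δ = (k - δ + 1) * (n - k) - δ ^ 2 := by
    have h1 : k - δ + 1 = a + δ := by omega
    have h2 : n - (k + δ) = (n - k) - δ := by omega
    rw [h1, h2, Nat.sub_mul (n - k) δ δ, Nat.add_mul, pow_two]
    rw [mul_comm (n - k) a, mul_comm (n - k) δ]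
    have h4 : δ * δ ≤ δ * (n - k) := Nat.mul_le_mul_left δ (by omega)
    omega
  have hπbij : Function.Bijective π := by
    rw [Nat.bijective_iff_injective_and_card]
    refine ⟨hπinj, ?_⟩
    rw [hC2, Nat.card_eq_fintype_card]
    simp only [Fintype.card_prod, Fintype.card_fun, Fintype.card_fin]
    rw [← pow_mul, ← pow_mul, ← pow_add, hexp]
  -- pick the member of C₂ matching Y
  obtain ⟨Xs, hπXs⟩ := hπbij.2
    (fun s j => MY (ι s) (fcol j), fun r j => MY (ρ r) (bcol j))
  set A : Matrix (Fin k) (Fin n) F := MXf Xs.1 Xs.2 with hAdef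
  have hRA : IsRREFWithPivots A pV := hMXrref Xs.1 Xs.2
  have hspA : Submodule.span F (Set.range A) = (Xs : Submodule F (Fin n → F)) :=
    hMXspan Xs.1 Xs.2
  have hW1 : ∀ s j, (∑ l, MY (ι s) (pV l) • A l) (fcol j) = MY (ι s) (fcol j) := by
    intro s j
    exact congrFun (congrFun (congrArg Prod.fst hπXs) s) j
  have hW2 : ∀ r j, A (botIdx r) (bcol j) = MY (ρ r) (bcol j) := by
    intro r j
    exact congrFun (congrFun (congrArg Prod.snd hπXs) r) j
  have hvX : ∀ s : Fin a, MY (ι s) ∈ (Xs : Submodule F (Fin n → F)) := by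
    intro s
    have hrepr : MY (ι s) = ∑ l, MY (ι s) (pV l) • A l := by
      funext j
      rcases colCases j with ⟨l, rfl⟩ | ⟨j', rfl⟩
      · rw [rref_sum_apply_piv hRA]
      · rw [hW1 s j']
    rw [hrepr, ← hspA]
    exact Submodule.sum_mem _ fun l _ =>
      Submodule.smul_mem _ _ (Submodule.subset_span ⟨l, rfl⟩)
  have hwX : ∀ r : Fin δ, MY (ρ r) ∈ (Xs : Submodule F (Fin n → F)) := by
    intro r
    have hsum : ∑ l, (if l = botIdx r then (1 : F) else 0) • A l = A (botIdx r) := by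
      rw [Finset.sum_eq_single (botIdx r)]
      · simp
      · intro l _ hl; simp [hl]
      · simp
    have hrepr : MY (ρ r) = ∑ l, (if l = botIdx r then (1 : F) else 0) • A l := by
      rw [hsum]
      funext j
      rcases colCases j with ⟨l, rfl⟩ | ⟨j', rfl⟩
      · by_cases hl : l = botIdx r
        · subst hl
          rw [hRA.2.1]
          have hcol : pV (botIdx r) = pivY (ρ r) := Fin.ext (by rw [hpVbot, hρv])
          rw [hcol, h1Y]
        · rw [hRA.2.2.2 l (botIdx r) (Ne.symm hl)]
          by_cases hltop : (l : ℕ) < k - δ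
          · apply h0Y
            rw [Fin.lt_def]
            rw [hpVtop l hltop, hρv]
            omega
          · have hlval := l.isLt
            set r'' : Fin δ := ⟨(l : ℕ) - (k - δ), by omega⟩ with hr''def
            have hl2 : l = botIdx r'' := Fin.ext (by
              rw [show ((botIdx r'' : Fin k) : ℕ) = k - δ + ((r'' : Fin δ) : ℕ) from rfl]
              rw [show ((r'' : Fin δ) : ℕ) = (l : ℕ) - (k - δ) from rfl]
              omega)
            have hcol : pV l = pivY (ρ r'') := by
              rw [hl2]
              exact Fin.ext (by rw [hpVbot, hρv])
            rw [hcol]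
            apply hcY
            intro hco
            apply hl
            have := hρinj hco
            rw [hl2, this]
      · by_cases hj : (j' : ℕ) < δ
        · have hlt : (fcol j') < pV (botIdx r) := by
            rw [Fin.lt_def, hfval, hpVbot, if_pos hj]
            omega
          rw [hRA.2.2.1 _ _ hlt]
          apply h0Y
          rw [Fin.lt_def, hfval, hρv, if_pos hj]
          omega
        · have hfb : fcol j' = bcol ⟨(j' : ℕ) - δ, by have := j'.isLt; omega⟩ := by
            apply Fin.ext
            rw [hfval, hbval, if_neg hj]
            rw [show ((⟨(j' : ℕ) - δ, by have := j'.isLt; omega⟩ : Fin (n - (k + δ))) : ℕ)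
              = (j' : ℕ) - δ from rfl]
            omega
          rw [hfb]
          exact (hW2 r _).symm
    rw [hrepr, ← hspA]
    exact Submodule.sum_mem _ fun l _ =>
      Submodule.smul_mem _ _ (Submodule.subset_span ⟨l, rfl⟩)
  -- the k - δ + 1 independent rows of Y inside Xs ⊓ Y
  set σ : Fin a ⊕ Fin δ → Fin k := Sum.elim ι ρ with hσdef
  have hσinj : Function.Injective σ := by
    rintro (s | r) (s' | r') h
    · rw [hιinj h]
    · exact absurd h (hιρ s r')
    · exact absurd h.symm (hιρ s' r)
    · rw [hρinj h]
  have hrc : ∀ i i0, MY (σ i) (pivY (σ i0)) = if i = i0 then (1 : F) else 0 := by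
    intro i i0
    by_cases hii : i = i0
    · subst hii; simp [h1Y]
    · have : σ i ≠ σ i0 := fun h => hii (hσinj h)
      rw [hcY (σ i0) (σ i) this, if_neg hii]
  have hrind : LinearIndependent F (fun i => MY (σ i)) := by
    rw [Fintype.linearIndependent_iff]
    intro g hg i0
    have hcol := congrFun hg (pivY (σ i0))
    rw [Finset.sum_apply] at hcol
    simp only [Pi.smul_apply, smul_eq_mul] at hcol
    rw [Finset.sum_congr rfl (fun i _ => by rw [hrc i i0])] at hcol
    simpa using hcol
  have hmemXY : ∀ i, MY (σ i) ∈ ((Xs : Submodule F (Fin n → F)) ⊓ Y) := by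
    rintro (s | r)
    · exact ⟨hvX s, by rw [← hspanY]; exact Submodule.subset_span ⟨ι s, rfl⟩⟩
    · exact ⟨hwX r, by rw [← hspanY]; exact Submodule.subset_span ⟨ρ r, rfl⟩⟩
  have hindsub : LinearIndependent F
      (fun i => (⟨MY (σ i), hmemXY i⟩ : ↥((Xs : Submodule F (Fin n → F)) ⊓ Y))) :=
    LinearIndependent.of_comp (((Xs : Submodule F (Fin n → F)) ⊓ Y).subtype) (by exact hrind)
  have hfr : a + δ ≤ Module.finrank F ↥((Xs : Submodule F (Fin n → F)) ⊓ Y) := by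
    have := hindsub.fintype_card_le_finrank
    simpa using this
  have hXsC : (Xs : Submodule F (Fin n → F)) ∈ C := Xs.2.1
  have hXY : (Xs : Submodule F (Fin n → F)) ≠ Y := by
    intro hXYeq
    have hneq : ∃ j, idVec pivY j ≠ idVec pV j := by
      by_contra hc
      push_neg at hc
      apply hne
      rw [← hidpV]
      funext j
      exact hc j
    obtain ⟨j, hj⟩ := hneq
    by_cases hcase : ∃ i, pivY i = j
    · obtain ⟨i, rfl⟩ := hcase
      have hmem : MY i ∈ Submodule.span F (Set.range A) := by
        rw [hspA, hXYeq, ← hspanY]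
        exact Submodule.subset_span ⟨i, rfl⟩
      have hlead := rref_leading hRA hmem (fun j' hj' => h0Y i j' hj')
        (by rw [h1Y]; exact one_ne_zero)
      apply hj
      simp only [idVec, decide_eq_decide]
      exact ⟨fun _ => hlead, fun _ => ⟨i, rfl⟩⟩
    · have hPV : ∃ l, pV l = j := by
        by_contra hc
        apply hj
        simp only [idVec, decide_eq_decide]
        exact ⟨fun h => absurd h hcase, fun h => absurd h hc⟩
      obtain ⟨l, rfl⟩ := hPV
      have hmem : A l ∈ Submodule.span F (Set.range MY) := by
        rw [hspanY, ← hXYeq, ← hspA]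
        exact Submodule.subset_span ⟨l, rfl⟩
      have hlead := rref_leading hRY hmem (fun j' hj' => hRA.2.2.1 l j' hj')
        (by rw [hRA.2.1]; exact one_ne_zero)
      exact hcase hlead
  have h2d := hdist _ hXsC Y hY hXY
  have hsd : subDist (Xs : Submodule F (Fin n → F)) Y
      = k + k - 2 * Module.finrank F ↥((Xs : Submodule F (Fin n → F)) ⊓ Y) := by
    rw [subDist, hdim _ hXsC, hdim Y hY]
  rw [hsd] at h2d
  omega
end
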